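/- Let (V, μ) be a σ-finite measure space, λ : V → ℝ measurable with λ(x) > 0 for all x, ρ : V × V → ℝ measurable, g : V → EuclideanSpace ℝ (Fin p) measurable, and k > 0 a real number. Assume the functions (x,y) ↦ (g(x)·g(y)) ρ(x,y), (x,y) ↦ λ(x)λ(y)(g(x)·g(y)), x ↦ ‖g(x)‖² λ(x), and x ↦ λ(x) • g(x) are integrable (on V×V with μ⊗μ, resp. on V with μ). Then (1/k²) ∫∫ (g(x)·g(y)) ρ(x,y) dμ(x)dμ(y) + (1/k²) ∫ ‖g(x)‖² λ(x) dμ(x) − ‖(1/k) ∫ λ(x) • g(x) dμ(x)‖² = (1/k²) ∫∫ λ(x)λ(y)(g(x)·g(y)) (ρ(x,y)/(λ(x)λ(y)) − 1) dμ(x)dμ(y) + (1/k²) ∫ ‖g(x)‖² λ(x) dμ(x). (Theorem 1: closed form of the variance var_P(Ĝ) of the point-process mini-batch gradient estimator.) -/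

import Mathlib

open MeasureTheory
open scoped InnerProductSpace

/-- Theorem 1: closed form of the variance of the point-process mini-batch
gradient estimator. -/
theorem variance_formula_point_process
    {V : Type*} [MeasurableSpace V] (μ : Measure V) [SigmaFinite μ]
    {p : ℕ} (lam : V → ℝ) (ρ : V × V → ℝ) (g : V → EuclideanSpace ℝ (Fin p)) (k : ℝ)
    (hlam : Measurable lam) (hlampos : ∀ x, 0 < lam x)
    (hρ : Measurable ρ) (hg : Measurable g) (hk : 0 < k)
    (h1 : Integrable (fun z : V × V => ⟪g z.1, g z.2⟫_ℝ * ρ z) (μ.prod μ))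
    (h2 : Integrable (fun z : V × V => lam z.1 * lam z.2 * ⟪g z.1, g z.2⟫_ℝ) (μ.prod μ))
    (h3 : Integrable (fun x => ‖g x‖ ^ 2 * lam x) μ)
    (h4 : Integrable (fun x => lam x • g x) μ) :
    (1 / k ^ 2) * ∫ z : V × V, ⟪g z.1, g z.2⟫_ℝ * ρ z ∂(μ.prod μ)
      + (1 / k ^ 2) * ∫ x, ‖g x‖ ^ 2 * lam x ∂μ
      - ‖(1 / k) • ∫ x, lam x • g x ∂μ‖ ^ 2
    = (1 / k ^ 2) * ∫ z : V × V,
        lam z.1 * lam z.2 * ⟪g z.1, g z.2⟫_ℝ * (ρ z / (lam z.1 * lam z.2) - 1) ∂(μ.prod μ)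
      + (1 / k ^ 2) * ∫ x, ‖g x‖ ^ 2 * lam x ∂μ := by
  have hint : ∀ z : V × V,
      lam z.1 * lam z.2 * ⟪g z.1, g z.2⟫_ℝ * (ρ z / (lam z.1 * lam z.2) - 1)
      = ⟪g z.1, g z.2⟫_ℝ * ρ z - lam z.1 * lam z.2 * ⟪g z.1, g z.2⟫_ℝ := by
    intro z
    have h12 : lam z.1 * lam z.2 ≠ 0 :=
      (mul_pos (hlampos z.1) (hlampos z.2)).ne'
    have h1' : lam z.1 ≠ 0 := (hlampos z.1).ne'
    have h2' : lam z.2 ≠ 0 := (hlampos z.2).ne'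
    field_simp
  have hrw : ∫ z : V × V,
      lam z.1 * lam z.2 * ⟪g z.1, g z.2⟫_ℝ * (ρ z / (lam z.1 * lam z.2) - 1) ∂(μ.prod μ)
      = ∫ z : V × V, (⟪g z.1, g z.2⟫_ℝ * ρ z - lam z.1 * lam z.2 * ⟪g z.1, g z.2⟫_ℝ)
        ∂(μ.prod μ) := by
    exact integral_congr_ae (Filter.Eventually.of_forall hint)
  rw [hrw, integral_sub h1 h2]
  have hnorm : ‖(1 / k) • ∫ x, lam x • g x ∂μ‖ ^ 2
      = (1 / k ^ 2) * ∫ z : V × V, lam z.1 * lam z.2 * ⟪g z.1, g z.2⟫_ℝ ∂(μ.prod μ) := by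
    have key : ∫ z : V × V, lam z.1 * lam z.2 * ⟪g z.1, g z.2⟫_ℝ ∂(μ.prod μ)
        = ⟪∫ x, lam x • g x ∂μ, ∫ x, lam x • g x ∂μ⟫_ℝ := by
      have heq : ∀ z : V × V, lam z.1 * lam z.2 * ⟪g z.1, g z.2⟫_ℝ
          = ⟪lam z.1 • g z.1, lam z.2 • g z.2⟫_ℝ := by
        intro z
        rw [real_inner_smul_left, real_inner_smul_right]; ring
      rw [integral_congr_ae (Filter.Eventually.of_forall heq)]
      rw [integral_prod _ (by
        apply (integrable_congr (Filter.Eventually.of_forall fun z => (heq z).symm)).mpr h2)]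
      calc ∫ x, ∫ y, ⟪lam x • g x, lam y • g y⟫_ℝ ∂μ ∂μ
          = ∫ x, ⟪lam x • g x, ∫ y, lam y • g y ∂μ⟫_ℝ ∂μ := by
            refine integral_congr_ae (Filter.Eventually.of_forall fun x => ?_)
            exact integral_inner h4 _
        _ = ⟪∫ x, lam x • g x ∂μ, ∫ y, lam y • g y ∂μ⟫_ℝ := by
            have := integral_inner (𝕜 := ℝ) h4 (∫ y, lam y • g y ∂μ)
            rw [← this]
            refine integral_congr_ae (Filter.Eventually.of_forall fun x => ?_)
            exact real_inner_comm _ _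
    rw [key, real_inner_self_eq_norm_sq, norm_smul, mul_pow, Real.norm_eq_abs, sq_abs]
    ring
  rw [hnorm]
  ring
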